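/- Let n ≥ 2 and let T be a nonempty finite family of arcs (each of length ≥ 3). Then 3 · q(T) ≤ 2 · n!; that is, the number of linear orders on ZMod n admissible for every arc of T is at most (2/3) · n!. (This establishes the q-ordering conjecture q(A) ≤ (2/3) n! for all non-hereditary Nakayama algebras A.) -/
import Mathlib


/-- The denouement of an arc `(h, ℓ)`: the vertex `h + (ℓ - 1)` in `ZMod n`. -/
def arcDen {n : ℕ} (g : ZMod n × ℕ) : ZMod n := g.1 + ((g.2 - 1 : ℕ) : ZMod n)

/-- The interior of an arc `(h, ℓ)`: the set `{h + j : 1 ≤ j ≤ ℓ - 2}` in `ZMod n`. -/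
def arcInt {n : ℕ} (g : ZMod n × ℕ) : Finset (ZMod n) :=
  (Finset.Icc 1 (g.2 - 2)).image (fun j : ℕ => g.1 + (j : ZMod n))

/-- The hood of an arc `(h, ℓ)`: the set `{h + j : 0 ≤ j ≤ ℓ - 1}` in `ZMod n`. -/
def arcHood {n : ℕ} (g : ZMod n × ℕ) : Finset (ZMod n) :=
  (Finset.range g.2).image (fun j : ℕ => g.1 + (j : ZMod n))

/-- A linear order on `ZMod n`, encoded by its ranking equivalence `σ : ZMod n ≃ Fin n`
(`v ≺ w` iff `σ v < σ w`), is admissible for the arc `g` if every interior vertex of `g`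
lies strictly below the hook or strictly below the denouement of `g`. -/
def Admissible {n : ℕ} (σ : ZMod n ≃ Fin n) (g : ZMod n × ℕ) : Prop :=
  ∀ v ∈ arcInt g, σ v < σ g.1 ∨ σ v < σ (arcDen g)

/-- `qCount n T` is the number of linear orders on `ZMod n` (encoded by ranking
equivalences `ZMod n ≃ Fin n`) admissible for every arc of `T`. -/
noncomputable def qCount (n : ℕ) (T : Finset (ZMod n × ℕ)) : ℕ :=
  Nat.card {σ : ZMod n ≃ Fin n // ∀ g ∈ T, Admissible σ g}

/-- `qCountAt n x T` is the number of linear orders on `ZMod n` admissible for every arc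
of `T` and whose greatest element is `x`. -/
noncomputable def qCountAt (n : ℕ) (x : ZMod n) (T : Finset (ZMod n × ℕ)) : ℕ :=
  Nat.card {σ : ZMod n ≃ Fin n //
    (∀ g ∈ T, Admissible σ g) ∧ ∀ v : ZMod n, σ v ≤ σ x}

/-- `delAt x T` is the subfamily of arcs of `T` for which `x` is neither the hook nor
the denouement. -/
def delAt {n : ℕ} (x : ZMod n) (T : Finset (ZMod n × ℕ)) : Finset (ZMod n × ℕ) :=
  T.filter fun g => g.1 ≠ x ∧ arcDen g ≠ x

/-- The arc `g'` is a subpath of the arc `g` if there is `j ≥ 0` with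
`h' = h + j` in `ZMod n` and `j + ℓ' ≤ ℓ`. -/
def Subpath {n : ℕ} (g' g : ZMod n × ℕ) : Prop :=
  ∃ j : ℕ, g'.1 = g.1 + (j : ZMod n) ∧ j + g'.2 ≤ g.2

/-- Auxiliary: if some interior vertex of `g` differs from both the hook and the
denouement, then at least a third of all linear orders are inadmissible for `g`. -/
lemma bad_count {n : ℕ} [NeZero n] (g : ZMod n × ℕ) (v : ZMod n)
    (hv : v ∈ arcInt g) (hvh : v ≠ g.1) (hvd : v ≠ arcDen g) :
    Nat.factorial n ≤ 3 * Nat.card {σ : ZMod n ≃ Fin n // ¬ Admissible σ g} := by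
  classical
  set h := g.1 with hh
  set d := arcDen g with hd
  -- the argmax of σ over {v, h, d}
  set w : (ZMod n ≃ Fin n) → ZMod n := fun σ =>
    if σ v < σ h then (if σ h < σ d then d else h) else (if σ v < σ d then d else v)
    with hwdef
  have hw : ∀ σ : ZMod n ≃ Fin n,
      (w σ = v ∨ w σ = h ∨ w σ = d) ∧ σ v ≤ σ (w σ) ∧ σ h ≤ σ (w σ) ∧ σ d ≤ σ (w σ) := by
    intro σ
    simp only [hwdef]
    split_ifs with h1 h2 h2 <;>
      refine ⟨by tauto, ?_, ?_, ?_⟩ <;>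
      simp only [Fin.le_def, Fin.lt_def] at h1 h2 ⊢ <;> omega
  set f : (ZMod n ≃ Fin n) → (ZMod n ≃ Fin n) := fun σ => (Equiv.swap v (w σ)).trans σ
    with hfdef
  have hkey : ∀ (σ : ZMod n ≃ Fin n) (x : ZMod n), x = h ∨ x = d → f σ x < f σ v := by
    intro σ x hx
    have hwσ := hw σ
    have hxv : x ≠ v := by rcases hx with rfl | rfl
                           · exact Ne.symm hvh
                           · exact Ne.symm hvd
    have h1 : f σ v = σ (w σ) := by simp [hfdef]
    have h2 : f σ x = σ (Equiv.swap v (w σ) x) := rfl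
    set y := Equiv.swap v (w σ) x with hy
    have hyne : y ≠ w σ := by
      intro hcon
      have : Equiv.swap v (w σ) x = Equiv.swap v (w σ) v := by
        rw [Equiv.swap_apply_left]; exact hcon
      exact hxv ((Equiv.swap v (w σ)).injective this)
    have hyle : σ y ≤ σ (w σ) := by
      rcases eq_or_ne x (w σ) with hxw | hxw
      · rw [hy, hxw, Equiv.swap_apply_right]; exact hwσ.2.1
      · rw [hy, Equiv.swap_apply_of_ne_of_ne hxv hxw]
        rcases hx with rfl | rfl
        · exact hwσ.2.2.1
        · exact hwσ.2.2.2
    have hne : σ y ≠ σ (w σ) := fun hc => hyne (σ.injective hc)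
    rw [h1, h2]
    exact lt_of_le_of_ne hyle hne
  have hbad : ∀ σ, ¬ Admissible (f σ) g := by
    intro σ hadm
    rcases hadm v hv with hlt | hlt
    · exact absurd (hkey σ h (Or.inl rfl)) (lt_asymm hlt)
    · exact absurd (hkey σ d (Or.inr rfl)) (lt_asymm hlt)
  have hcard : (Finset.univ : Finset (ZMod n ≃ Fin n)).card = n.factorial := by
    rw [Finset.card_univ, Fintype.card_equiv (Fintype.equivFinOfCardEq (ZMod.card n)),
      ZMod.card]
  have hmain : (Finset.univ : Finset (ZMod n ≃ Fin n)).card ≤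
      3 * ((Finset.univ : Finset (ZMod n ≃ Fin n)).image f).card := by
    apply Finset.card_le_mul_card_image
    intro τ _
    have hsub : (Finset.univ.filter fun σ => f σ = τ) ⊆
        {τ, (Equiv.swap v h).trans τ, (Equiv.swap v d).trans τ} := by
      intro σ hσ
      simp only [Finset.mem_filter, Finset.mem_univ, true_and] at hσ
      have hστ : σ = (Equiv.swap v (w σ)).trans τ := by
        rw [← hσ]; ext x; simp [hfdef, Equiv.swap_apply_self]
      rcases (hw σ).1 with h1 | h1 | h1 <;> rw [h1] at hστ <;>
        simp only [Finset.mem_insert, Finset.mem_singleton]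
      · left; rw [hστ, Equiv.swap_self]; rfl
      · right; left; exact hστ
      · right; right; exact hστ
    calc (Finset.univ.filter fun σ => f σ = τ).card
        ≤ ({τ, (Equiv.swap v h).trans τ, (Equiv.swap v d).trans τ} :
            Finset (ZMod n ≃ Fin n)).card := Finset.card_le_card hsub
      _ ≤ 3 := by
          refine le_trans (Finset.card_insert_le _ _) ?_
          refine Nat.succ_le_succ (le_trans (Finset.card_insert_le _ _) ?_)
          simp
  have himg : (Finset.univ.image f) ⊆
      Finset.univ.filter (fun σ : ZMod n ≃ Fin n => ¬ Admissible σ g) := by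
    intro τ hτ
    simp only [Finset.mem_image, Finset.mem_univ, true_and] at hτ
    obtain ⟨σ, rfl⟩ := hτ
    simp only [Finset.mem_filter, Finset.mem_univ, true_and]
    exact hbad σ
  have hcount : Nat.card {σ : ZMod n ≃ Fin n // ¬ Admissible σ g} =
      (Finset.univ.filter (fun σ : ZMod n ≃ Fin n => ¬ Admissible σ g)).card := by
    rw [Nat.card_eq_fintype_card, Fintype.card_subtype]
  rw [hcount]
  calc n.factorial = (Finset.univ : Finset (ZMod n ≃ Fin n)).card := hcard.symm
    _ ≤ 3 * ((Finset.univ : Finset (ZMod n ≃ Fin n)).image f).card := hmain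
    _ ≤ 3 * (Finset.univ.filter (fun σ : ZMod n ≃ Fin n => ¬ Admissible σ g)).card :=
        Nat.mul_le_mul_left 3 (Finset.card_le_card himg)

/-- q-ordering conjecture for Nakayama algebras: for every nonempty
finite family `T` of arcs, each of length `≥ 3`, we have `3 ⬝ q(T) ≤ 2 ⬝ n!`, i.e.
`q(T) ≤ (2/3) ⬝ n!`. -/
theorem q_conjecture_Nakayama (n : ℕ) (hn : 2 ≤ n)
    (T : Finset (ZMod n × ℕ)) (hT : ∀ g ∈ T, 3 ≤ g.2) (hne : T.Nonempty) :
    3 * qCount n T ≤ 2 * Nat.factorial n := by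
  classical
  haveI : NeZero n := ⟨by omega⟩
  obtain ⟨g, hg⟩ := hne
  have hl : 3 ≤ g.2 := hT g hg
  set h := g.1 with hh
  set d := arcDen g with hd
  -- basic facts about casts
  have cast_ne : ∀ j k : ℕ, j < n → k < n → j ≠ k → (j : ZMod n) ≠ (k : ZMod n) := by
    intro j k hj hk hjk hc
    apply hjk
    have := congrArg ZMod.val hc
    rwa [ZMod.val_cast_of_lt hj, ZMod.val_cast_of_lt hk] at this
  have one_ne_zero' : (1 : ZMod n) ≠ 0 := by
    have := cast_ne 1 0 (by omega) (by omega) (by omega)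
    simpa using this
  by_cases hex : ∃ v ∈ arcInt g, v ≠ h ∧ v ≠ d
  · obtain ⟨v, hv, hvh, hvd⟩ := hex
    have hbad := bad_count g v hv hvh hvd
    -- qCount ≤ number admissible for g
    have hmono : qCount n T ≤ Nat.card {σ : ZMod n ≃ Fin n // Admissible σ g} := by
      rw [qCount, Nat.card_eq_fintype_card, Nat.card_eq_fintype_card]
      exact Fintype.card_subtype_mono _ _ (fun σ hσ => hσ g hg)
    have hsplit : Nat.card {σ : ZMod n ≃ Fin n // Admissible σ g} +
        Nat.card {σ : ZMod n ≃ Fin n // ¬ Admissible σ g} = n.factorial := by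
      rw [Nat.card_eq_fintype_card, Nat.card_eq_fintype_card,
        Fintype.card_subtype, Fintype.card_subtype,
        Finset.card_filter_add_card_filter_not, Finset.card_univ,
        Fintype.card_equiv (Fintype.equivFinOfCardEq (ZMod.card n)), ZMod.card]
    omega
  · -- degenerate case: every interior vertex is the hook or the denouement
    push_neg at hex
    -- first, h + 1 is interior and differs from h, so d = h + 1
    have h1mem : h + ((1 : ℕ) : ZMod n) ∈ arcInt g := by
      rw [arcInt]
      exact Finset.mem_image.2 ⟨1, Finset.mem_Icc.2 ⟨le_refl 1, by omega⟩, rfl⟩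
    have h1ne : h + ((1 : ℕ) : ZMod n) ≠ h := by
      intro hc
      apply one_ne_zero'
      have := add_left_cancel (a := h) (by rw [hc]; simp : h + ((1 : ℕ) : ZMod n) = h + 0)
      simpa using this
    have hd1 : d = h + ((1 : ℕ) : ZMod n) := (hex _ h1mem h1ne).symm
    -- ℓ ≠ 3: otherwise d = h + 2 ≠ h + 1
    have hl4 : 4 ≤ g.2 := by
      rcases Nat.lt_or_ge g.2 4 with h4 | h4
      · exfalso
        have hl3 : g.2 = 3 := by omega
        have : d = h + ((2 : ℕ) : ZMod n) := by rw [hd, arcDen, hl3]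
        rw [hd1] at this
        have h21 : ((1 : ℕ) : ZMod n) = ((2 : ℕ) : ZMod n) := add_left_cancel this
        rcases Nat.lt_or_ge 2 n with h2n | h2n
        · exact cast_ne 1 2 (by omega) h2n (by omega) h21
        · -- n = 2, then (2 : ZMod n) = 0 but (1 : ZMod n) ≠ 0
          have hn2 : n = 2 := by omega
          apply one_ne_zero'
          have : ((2 : ℕ) : ZMod n) = 0 := by
            rw [ZMod.natCast_eq_zero_iff, hn2]
          rw [← this]; exact_mod_cast h21
      · exact h4
    -- h + 2 is interior; h + 2 ≠ d, so h + 2 = h, forcing n = 2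
    have h2mem : h + ((2 : ℕ) : ZMod n) ∈ arcInt g := by
      rw [arcInt]
      exact Finset.mem_image.2 ⟨2, Finset.mem_Icc.2 ⟨by omega, by omega⟩, rfl⟩
    have h2ned : h + ((2 : ℕ) : ZMod n) ≠ d := by
      rw [hd1]
      intro hc
      have h21 : ((2 : ℕ) : ZMod n) = ((1 : ℕ) : ZMod n) := add_left_cancel hc
      apply one_ne_zero'
      have : ((2 : ℕ) : ZMod n) - ((1 : ℕ) : ZMod n) = 0 := by rw [h21]; ring
      calc (1 : ZMod n) = ((2 : ℕ) : ZMod n) - ((1 : ℕ) : ZMod n) := by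
            push_cast; ring
        _ = 0 := this
    have h2h : h + ((2 : ℕ) : ZMod n) = h := by
      by_contra hcon
      exact h2ned (hex _ h2mem hcon)
    have h20 : ((2 : ℕ) : ZMod n) = 0 := by
      have := add_left_cancel (a := h) (by rw [h2h]; simp : h + ((2 : ℕ) : ZMod n) = h + 0)
      simpa using this
    -- so h ∈ interior and d ∈ interior while h ≠ d: no admissible order exists.
    have hhmem : h ∈ arcInt g := by rw [← h2h]; exact h2mem
    have hdmem : d ∈ arcInt g := by rw [hd1]; exact h1mem
    have hempty : qCount n T = 0 := by
      rw [qCount, Nat.card_eq_zero]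
      left
      constructor
      rintro ⟨σ, hσ⟩
      have hadm := hσ g hg
      have h1 := hadm h hhmem
      have h2 := hadm d hdmem
      rcases h1 with h1 | h1
      · exact lt_irrefl _ h1
      · rcases h2 with h2 | h2
        · exact lt_asymm h1 h2
        · exact lt_irrefl _ h2
    rw [hempty]
    omega
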